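/- Let T be an ℕ-graded commutative ring, d > 0, and σ ∈ T_d a homogeneous element of degree d. Then the ring T/(σ − 1) is a finite module over its subring T^{(d)}/(σ − 1), where T^{(d)} = ⊕_{n≥0} T_{nd} is the d-th Veronese subring. -/

import Mathlib

/-- Let `T = ⊕_{n≥0} T_n` be an ℕ-graded commutative ring which is a
finitely generated `T₀`-algebra, let `d > 0` and let `σ ∈ T_d` be homogeneous of
degree `d`.  Then `T/(σ - 1)` is a finite module over (the image of) the `d`-th
Veronese subring `T^{(d)} = ⊕_n T_{nd}`: there is a finite set generating `T/(σ-1)`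
as a module over the subring generated by the images of the `T_{nd}`. -/
theorem stmt_10 {T : Type*} [CommRing T] (𝒜 : ℕ → AddSubgroup T) [GradedRing 𝒜]
    (hfg : ∃ s : Finset T, ∀ x : T, x ∈ Subring.closure ((𝒜 0 : Set T) ∪ s))
    (d : ℕ) (hd : 0 < d) (σ : T) (hσ : σ ∈ 𝒜 d) :
    ∃ gens : Finset (T ⧸ Ideal.span {σ - 1}),
      ∀ y : T ⧸ Ideal.span {σ - 1},
        y ∈ Submodule.span
          (Subring.closure
            (⋃ n : ℕ, (Ideal.Quotient.mk (Ideal.span {σ - 1})) '' (𝒜 (n * d) : Set T)))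
          (gens : Set (T ⧸ Ideal.span {σ - 1})) := by
  classical
  obtain ⟨s, hs⟩ := hfg
  set I : Ideal T := Ideal.span {σ - 1} with hI
  set mk : T →+* T ⧸ I := Ideal.Quotient.mk I with hmk
  set R : Subring (T ⧸ I) :=
    Subring.closure (⋃ n : ℕ, mk '' (𝒜 (n * d) : Set T)) with hR
  -- homogeneous components of the generators
  set X : Finset T := s.biUnion
    (fun t => (DirectSum.decompose 𝒜 t).support.image
      (fun i => (DirectSum.decompose 𝒜 t i : T))) with hXdef
  have hX : ∀ x : ↥(X : Finset T), ∃ n, (x : T) ∈ 𝒜 n := by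
    rintro ⟨x, hx⟩
    simp only [hXdef, Finset.mem_biUnion, Finset.mem_image] at hx
    obtain ⟨t, -, n, -, rfl⟩ := hx
    exact ⟨n, (DirectSum.decompose 𝒜 t n).2⟩
  choose deg hdeg using hX
  -- monomials
  set mon : (↥(X : Finset T) → ℕ) → T := fun e => ∏ x : ↥(X : Finset T), (x : T) ^ (e x)
    with hmon
  set gens : Finset (T ⧸ I) :=
    Finset.image (fun γ : ↥(X : Finset T) → Fin d => mk (mon (fun x => (γ x : ℕ))))
      Finset.univ with hgens
  set M : Submodule R (T ⧸ I) := Submodule.span R (gens : Set (T ⧸ I)) with hM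
  refine ⟨gens, fun y => ?_⟩
  have hRmem : ∀ (m : ℕ) (y : T), y ∈ 𝒜 (m * d) → mk y ∈ R := by
    intro m y hy
    exact Subring.subset_closure (Set.mem_iUnion.2 ⟨m, ⟨y, hy, rfl⟩⟩)
  have hsmul : ∀ (r : T ⧸ I), r ∈ R → ∀ u ∈ M, r * u ∈ M := by
    intro r hr u hu
    exact M.smul_mem (⟨r, hr⟩ : R) hu
  -- every monomial lands in M
  have hmonM : ∀ e : ↥(X : Finset T) → ℕ, mk (mon e) ∈ M := by
    intro e
    have key : mon e = mon (fun x => d * (e x / d)) * mon (fun x => e x % d) := by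
      simp only [hmon, ← Finset.prod_mul_distrib]
      refine Finset.prod_congr rfl fun x _ => ?_
      rw [← pow_add, Nat.div_add_mod]
    have h1 : mon (fun x => d * (e x / d)) ∈ 𝒜 ((∑ x : ↥(X : Finset T), (e x / d) * deg x) * d) := by
      have := SetLike.prod_mem_graded 𝒜 (fun x : ↥(X : Finset T) => (d * (e x / d)) • deg x)
        (fun x => (x : T) ^ (d * (e x / d))) (F := Finset.univ)
        (fun x _ => SetLike.pow_mem_graded _ (hdeg x))
      convert this using 2
      rw [Finset.sum_mul]
      exact Finset.sum_congr rfl fun x _ => by simp [smul_eq_mul]; ring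
    have h2 : mk (mon (fun x => e x % d)) ∈ gens := by
      refine Finset.mem_image.2 ⟨fun x => ⟨e x % d, Nat.mod_lt _ hd⟩, Finset.mem_univ _, rfl⟩
    rw [key, map_mul]
    exact hsmul _ (hRmem _ _ h1) _ (Submodule.subset_span h2)
  -- M is closed under multiplication
  have hmul : ∀ u ∈ M, ∀ v ∈ M, u * v ∈ M := by
    have hgg : ∀ g1 ∈ gens, ∀ g2 ∈ gens, g1 * g2 ∈ M := by
      intro g1 hg1 g2 hg2
      obtain ⟨γ1, -, rfl⟩ := Finset.mem_image.1 hg1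
      obtain ⟨γ2, -, rfl⟩ := Finset.mem_image.1 hg2
      rw [← map_mul]
      have : mon (fun x => (γ1 x : ℕ)) * mon (fun x => (γ2 x : ℕ))
          = mon (fun x => (γ1 x : ℕ) + (γ2 x : ℕ)) := by
        simp only [hmon, ← Finset.prod_mul_distrib, ← pow_add]
      rw [this]; exact hmonM _
    have hgv : ∀ g ∈ gens, ∀ v ∈ M, g * v ∈ M := by
      intro g hg v hv
      induction hv using Submodule.span_induction with
      | mem x hx => exact hgg g hg x hx
      | zero => simpa using M.zero_mem
      | add x y hx hy ihx ihy => rw [mul_add]; exact M.add_mem ihx ihy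
      | smul r x hx ih =>
        rw [mul_smul_comm]; exact M.smul_mem r ih
    intro u hu v hv
    induction hu using Submodule.span_induction with
    | mem x hx => exact hgv x hx v hv
    | zero => simpa using M.zero_mem
    | add x y hx hy ihx ihy => rw [add_mul]; exact M.add_mem ihx ihy
    | smul r x hx ih => rw [smul_mul_assoc]; exact M.smul_mem r ih
  have hone : (1 : T ⧸ I) ∈ M := by
    have := hmonM (fun _ => 0)
    simpa [hmon] using this
  -- every element of T maps into M
  obtain ⟨x, rfl⟩ := Ideal.Quotient.mk_surjective y
  induction hs x using Subring.closure_induction with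
  | mem t ht =>
    rcases ht with ht | ht
    · have hrt : mk t ∈ R := hRmem 0 t (by simpa using ht)
      simpa using hsmul _ hrt 1 hone
    · -- t ∈ s : decompose into homogeneous components
      have hdec := DirectSum.sum_support_decompose 𝒜 t
      rw [← hdec, map_sum]
      refine M.sum_mem fun n hn => ?_
      have hxX : ((DirectSum.decompose 𝒜 t n : 𝒜 n) : T) ∈ X := by
        simp only [hXdef, Finset.mem_biUnion, Finset.mem_image]
        exact ⟨t, ht, n, hn, rfl⟩
      set a : ↥(X : Finset T) := ⟨_, hxX⟩ with ha
      have key2 : mon (fun x => if x = a then 1 else 0)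
          = ((DirectSum.decompose 𝒜 t n : 𝒜 n) : T) := by
        simp only [hmon]
        rw [Finset.prod_eq_single a (fun b _ hb => by simp [hb])
          (fun h => absurd (Finset.mem_univ a) h)]
        simp [ha]
      rw [← key2]
      exact hmonM _
  | zero => simpa using M.zero_mem
  | one => simpa using hone
  | add a b ha hb iha ihb => rw [map_add]; exact M.add_mem iha ihb
  | neg a ha ih => rw [map_neg]; exact M.neg_mem ih
  | mul a b ha hb iha ihb => rw [map_mul]; exact hmul _ iha _ ihb
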